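/- (Subadditivity) For any 1 ≤ z ≤ n and any x ≥ 0, the maximum load of the local search allocation satisfies P[X_max^(n) ≥ ⌈n/z⌉·x] ≤ ⌈n/z⌉ · P[X_max^(z) ≥ x]. -/

import Mathlib

open Finset

variable {V : Type*} [Fintype V] [DecidableEq V]

/-- One step of the local search from `u` with current loads `x`:
among the neighbors of `u` (listed in the tie-breaking order `ξ u`) that have load
strictly smaller than `x u`, move to the first one of minimal load; if there is no
such neighbor, stay at `u` (i.e. `u` is a local minimum). -/
def lsNext (G : SimpleGraph V) [DecidableRel G.Adj] (ξ : V → List V)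
    (x : V → ℕ) (u : V) : V :=
  ((((ξ u).filter (fun w => decide (G.Adj u w ∧ x w < x u)))).argmin x).getD u

/-- Iterate the local search for at most `n` steps (stopping at a local minimum). -/
def lsIter (G : SimpleGraph V) [DecidableRel G.Adj] (ξ : V → List V)
    (x : V → ℕ) : ℕ → V → V
  | 0, u => u
  | n + 1, u => if lsNext G ξ x u = u then u else lsIter G ξ x n (lsNext G ξ x u)

/-- The vertex where a ball born at `u` is placed: since each local-search step strictly
decreases the load, `x u` steps always suffice to reach a local minimum. -/
def lsPlace (G : SimpleGraph V) [DecidableRel G.Adj] (ξ : V → List V)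
    (x : V → ℕ) (u : V) : V :=
  lsIter G ξ x (x u) u

/-- Add one ball born at `u` to the load vector `x`. -/
def lsAdd (G : SimpleGraph V) [DecidableRel G.Adj] (ξ : V → List V)
    (x : V → ℕ) (u : V) : V → ℕ :=
  fun v => x v + if v = lsPlace G ξ x u then 1 else 0

/-- The load vector after allocating the balls with birthplaces `bs` (in order) by
local search allocation with the deterministic tie-breaking rule `ξ`. -/
def lsLoads (G : SimpleGraph V) [DecidableRel G.Adj] (ξ : V → List V)
    (bs : List V) : V → ℕ :=
  bs.foldl (lsAdd G ξ) (fun _ => 0)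

open scoped Classical

/-- The maximum load after allocating the balls with birthplaces `bs`. -/
noncomputable def lsMaxLoad (G : SimpleGraph V) [DecidableRel G.Adj] (ξ : V → List V)
    (bs : List V) : ℕ :=
  Finset.univ.sup (lsLoads G ξ bs)
-- AUX PART (to be inserted before the theorem)
section ArgminAux

variable {α : Type*}

lemma argmin_all_eq {f : α → ℕ} {c : ℕ} (l : List α) (h : ∀ w ∈ l, f w = c) :
    l.argmin f = l.head? := by
  cases l with
  | nil => simp
  | cons a l =>
    rw [List.argmin_cons]
    cases hm : l.argmin f with
    | none => rfl
    | some m =>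
      have hma : m ∈ l := List.argmin_mem hm
      have h1 : f m = c := h m (List.mem_cons_of_mem _ hma)
      have h2 : f a = c := h a (List.mem_cons_self)
      have : ¬ (f m < f a) := by rw [h1, h2]; exact lt_irrefl c
      simp [this]

lemma argmin_filter_coupling (f g : α → ℕ) (P Q : α → Bool)
    (hPQ : ∀ w, Q w = true → P w = true) (cf cg : ℕ) :
    ∀ (l : List α), (∀ w ∈ l, P w = true → f w = cf) →
      (∀ w ∈ l, Q w = true → g w = cg) →
      ∀ v, (l.filter P).argmin f = some v → Q v = true →
      (l.filter Q).argmin g = some v := by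
  intro l
  induction l with
  | nil => intro _ _ v hv _; simp at hv
  | cons a l ih =>
    intro hf hg v hv hQv
    by_cases hPa : P a = true
    · -- filter P (a :: l) = a :: filter P l and argmin is the head
      have hfilt : (a :: l).filter P = a :: l.filter P := List.filter_cons_of_pos hPa
      have hconst : ∀ w ∈ a :: l.filter P, f w = cf := by
        intro w hw
        rcases List.mem_cons.mp hw with rfl | hw
        · exact hf w (List.mem_cons_self) hPa
        · have := List.mem_filter.mp hw
          exact hf w (List.mem_cons_of_mem _ this.1) this.2
      have : (a :: l.filter P).argmin f = some a := by
        rw [argmin_all_eq _ hconst]; rfl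
      rw [hfilt, this] at hv
      obtain rfl : a = v := by exact Option.some.inj hv
      have hQa : Q a = true := hQv
      have hfiltQ : (a :: l).filter Q = a :: l.filter Q := List.filter_cons_of_pos hQa
      have hconstQ : ∀ w ∈ a :: l.filter Q, g w = cg := by
        intro w hw
        rcases List.mem_cons.mp hw with rfl | hw
        · exact hg w (List.mem_cons_self) hQa
        · have := List.mem_filter.mp hw
          exact hg w (List.mem_cons_of_mem _ this.1) this.2
      rw [hfiltQ, argmin_all_eq _ hconstQ]; rfl
    · have hQa : ¬ Q a = true := fun h => hPa (hPQ a h)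
      have hfilt : (a :: l).filter P = l.filter P := List.filter_cons_of_neg (by simpa using hPa)
      have hfiltQ : (a :: l).filter Q = l.filter Q := List.filter_cons_of_neg (by simpa using hQa)
      rw [hfilt] at hv
      rw [hfiltQ]
      exact ih (fun w hw => hf w (List.mem_cons_of_mem _ hw))
        (fun w hw => hg w (List.mem_cons_of_mem _ hw)) v hv hQv

end ArgminAux
section LSAux

variable (G : SimpleGraph V) [DecidableRel G.Adj] (ξ : V → List V)

/-- Configurations that are 1-Lipschitz along edges. -/
def EdgeLip (x : V → ℕ) : Prop := ∀ v w, G.Adj v w → x v ≤ x w + 1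

lemma lsNext_adj {x : V → ℕ} {u : V} (h : lsNext G ξ x u ≠ u) :
    G.Adj u (lsNext G ξ x u) ∧ x (lsNext G ξ x u) < x u := by
  rcases harg : ((ξ u).filter (fun w => decide (G.Adj u w ∧ x w < x u))).argmin x with _ | m
  · exfalso; apply h; unfold lsNext; rw [harg]; rfl
  · have hnext : lsNext G ξ x u = m := by unfold lsNext; rw [harg]; rfl
    have hm : m ∈ (ξ u).filter (fun w => decide (G.Adj u w ∧ x w < x u)) :=
      List.argmin_mem harg
    have := (List.mem_filter.mp hm).2
    rw [hnext]
    exact of_decide_eq_true this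

lemma lsNext_eq_self (hξ : ∀ v, (ξ v).Nodup ∧ ∀ w, w ∈ ξ v ↔ G.Adj v w)
    {x : V → ℕ} {u : V} (h : lsNext G ξ x u = u) :
    ∀ w, G.Adj u w → x u ≤ x w := by
  intro w hw
  by_contra hlt
  push_neg at hlt
  have hwl : w ∈ (ξ u).filter (fun w => decide (G.Adj u w ∧ x w < x u)) :=
    List.mem_filter.mpr ⟨((hξ u).2 w).mpr hw, decide_eq_true ⟨hw, hlt⟩⟩
  rcases harg : ((ξ u).filter (fun w => decide (G.Adj u w ∧ x w < x u))).argmin x with _ | m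
  · have hnil : (ξ u).filter (fun w => decide (G.Adj u w ∧ x w < x u)) = [] :=
      (List.argmin_eq_none (f := x)).mp harg
    rw [hnil] at hwl
    simp at hwl
  · have hm' : m ∈ (ξ u).filter (fun w => decide (G.Adj u w ∧ x w < x u)) :=
      List.argmin_mem harg
    have hnext : lsNext G ξ x u = m := by unfold lsNext; rw [harg]; rfl
    rw [h] at hnext
    rw [← hnext] at hm'
    have := of_decide_eq_true (List.mem_filter.mp hm').2
    exact G.irrefl this.1

lemma lsIter_of_fixed {x : V → ℕ} {u : V} (h : lsNext G ξ x u = u) :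
    ∀ k, lsIter G ξ x k u = u
  | 0 => rfl
  | k + 1 => by simp [lsIter, h]

lemma lsPlace_of_fixed {x : V → ℕ} {u : V} (h : lsNext G ξ x u = u) :
    lsPlace G ξ x u = u :=
  lsIter_of_fixed G ξ h _

lemma lsIter_stable {x : V → ℕ} :
    ∀ (N : ℕ) (u : V) (k m : ℕ), x u ≤ N → x u ≤ k → x u ≤ m →
      lsIter G ξ x k u = lsIter G ξ x m u := by
  intro N
  induction N with
  | zero =>
    intro u k m h0 _ _
    by_cases h : lsNext G ξ x u = u
    · rw [lsIter_of_fixed G ξ h, lsIter_of_fixed G ξ h]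
    · have := (lsNext_adj G ξ h).2; omega
  | succ N ih =>
    intro u k m hN hk hm
    by_cases h : lsNext G ξ x u = u
    · rw [lsIter_of_fixed G ξ h, lsIter_of_fixed G ξ h]
    · have hlt := (lsNext_adj G ξ h).2
      obtain ⟨k', rfl⟩ : ∃ k', k = k' + 1 := ⟨k - 1, by omega⟩
      obtain ⟨m', rfl⟩ : ∃ m', m = m' + 1 := ⟨m - 1, by omega⟩
      show lsIter G ξ x (k' + 1) u = lsIter G ξ x (m' + 1) u
      rw [show lsIter G ξ x (k' + 1) u
          = if lsNext G ξ x u = u then u else lsIter G ξ x k' (lsNext G ξ x u) from rfl,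
        show lsIter G ξ x (m' + 1) u
          = if lsNext G ξ x u = u then u else lsIter G ξ x m' (lsNext G ξ x u) from rfl]
      rw [if_neg h, if_neg h]
      exact ih (lsNext G ξ x u) k' m' (by omega) (by omega) (by omega)

lemma lsPlace_step {x : V → ℕ} {u : V} (h : lsNext G ξ x u ≠ u) :
    lsPlace G ξ x u = lsPlace G ξ x (lsNext G ξ x u) := by
  have hlt := (lsNext_adj G ξ h).2
  obtain ⟨t, ht⟩ : ∃ t, x u = t + 1 := ⟨x u - 1, by omega⟩
  unfold lsPlace
  rw [ht]
  rw [show lsIter G ξ x (t + 1) u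
      = if lsNext G ξ x u = u then u else lsIter G ξ x t (lsNext G ξ x u) from rfl]
  rw [if_neg h]
  exact lsIter_stable G ξ (x (lsNext G ξ x u)) _ t _ le_rfl (by omega) le_rfl

lemma lsNext_lsPlace (hξ : ∀ v, (ξ v).Nodup ∧ ∀ w, w ∈ ξ v ↔ G.Adj v w) {x : V → ℕ} :
    ∀ (N : ℕ) (u : V), x u ≤ N → lsNext G ξ x (lsPlace G ξ x u) = lsPlace G ξ x u := by
  intro N
  induction N with
  | zero =>
    intro u h0
    by_cases h : lsNext G ξ x u = u
    · rw [lsPlace_of_fixed G ξ h]; exact h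
    · exfalso; have := (lsNext_adj G ξ h).2; omega
  | succ N ih =>
    intro u hN
    by_cases h : lsNext G ξ x u = u
    · rw [lsPlace_of_fixed G ξ h]; exact h
    · rw [lsPlace_step G ξ h]
      exact ih _ (by have := (lsNext_adj G ξ h).2; omega)

lemma lsPlace_le {a b : V → ℕ} (hLb : EdgeLip G b) :
    ∀ (N : ℕ) (u : V), a u ≤ N →
      a (lsPlace G ξ a u) ≤ a u ∧
      b u + a (lsPlace G ξ a u) ≤ b (lsPlace G ξ a u) + a u := by
  intro N
  induction N with
  | zero =>
    intro u h0
    by_cases h : lsNext G ξ a u = u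
    · rw [lsPlace_of_fixed G ξ h]; omega
    · exfalso; have := (lsNext_adj G ξ h).2; omega
  | succ N ih =>
    intro u hN
    by_cases h : lsNext G ξ a u = u
    · rw [lsPlace_of_fixed G ξ h]; omega
    · obtain ⟨hadj, hlt⟩ := lsNext_adj G ξ h
      rw [lsPlace_step G ξ h]
      obtain ⟨h1, h2⟩ := ih (lsNext G ξ a u) (by omega)
      have hb := hLb u (lsNext G ξ a u) hadj
      omega

lemma lsPlace_coupling (hξ : ∀ v, (ξ v).Nodup ∧ ∀ w, w ∈ ξ v ↔ G.Adj v w)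
    {a b : V → ℕ} {M : ℕ} (hLa : EdgeLip G a) (hLb : EdgeLip G b)
    (hab : ∀ v, a v ≤ M + b v) :
    ∀ (N : ℕ) (u : V), a u ≤ N →
      a (lsPlace G ξ a u) = M + b (lsPlace G ξ a u) →
      lsPlace G ξ b u = lsPlace G ξ a u := by
  intro N
  induction N with
  | zero =>
    intro u h0 htight
    by_cases h : lsNext G ξ a u = u
    · rw [lsPlace_of_fixed G ξ h] at htight ⊢
      have hb : lsNext G ξ b u = u := by
        by_contra hb
        obtain ⟨hadj, hblt⟩ := lsNext_adj G ξ hb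
        have h3 := lsNext_eq_self G ξ hξ h _ hadj
        have h4 := hab (lsNext G ξ b u)
        omega
      exact lsPlace_of_fixed G ξ hb
    · exfalso; have := (lsNext_adj G ξ h).2; omega
  | succ N ih =>
    intro u hN htight
    by_cases h : lsNext G ξ a u = u
    · rw [lsPlace_of_fixed G ξ h] at htight ⊢
      have hb : lsNext G ξ b u = u := by
        by_contra hb
        obtain ⟨hadj, hblt⟩ := lsNext_adj G ξ hb
        have h3 := lsNext_eq_self G ξ hξ h _ hadj
        have h4 := hab (lsNext G ξ b u)
        omega
      exact lsPlace_of_fixed G ξ hb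
    · obtain ⟨hadj, hlt⟩ := lsNext_adj G ξ h
      have havu : a u ≤ a (lsNext G ξ a u) + 1 := hLa u _ hadj
      rw [lsPlace_step G ξ h] at htight ⊢
      obtain ⟨h1, h2⟩ := lsPlace_le G ξ hLb (a := a) N (lsNext G ξ a u) (by omega)
      have htv : a (lsNext G ξ a u) = M + b (lsNext G ξ a u) := by
        have h5 := hab (lsNext G ξ a u); omega
      have hbu : b u = b (lsNext G ξ a u) + 1 := by
        have h5 := hab u
        have h6 := hLb u (lsNext G ξ a u) hadj
        omega
      have hnb : lsNext G ξ b u = lsNext G ξ a u := by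
        have harga : ((ξ u).filter (fun w => decide (G.Adj u w ∧ a w < a u))).argmin a
            = some (lsNext G ξ a u) := by
          rcases harg : ((ξ u).filter (fun w => decide (G.Adj u w ∧ a w < a u))).argmin a
            with _ | m
          · exfalso; apply h; unfold lsNext; rw [harg]; rfl
          · congr 1
            unfold lsNext; rw [harg]; rfl
        have hcpl := argmin_filter_coupling a b
          (fun w => decide (G.Adj u w ∧ a w < a u))
          (fun w => decide (G.Adj u w ∧ b w < b u))
          (fun w hw => by
            obtain ⟨hadj', hblt'⟩ := of_decide_eq_true hw
            have h5 := hab w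
            have h6 := hLb u w hadj'
            exact decide_eq_true ⟨hadj', by omega⟩)
          (a (lsNext G ξ a u)) (b (lsNext G ξ a u)) (ξ u)
          (fun w _ hw => by
            obtain ⟨hadj', halt'⟩ := of_decide_eq_true hw
            have h6 := hLa u w hadj'
            omega)
          (fun w _ hw => by
            obtain ⟨hadj', hblt'⟩ := of_decide_eq_true hw
            have h6 := hLb u w hadj'
            omega)
          (lsNext G ξ a u) harga
          (decide_eq_true ⟨hadj, by omega⟩)
        unfold lsNext
        rw [hcpl]
        rfl
      have hvne : lsNext G ξ b u ≠ u := by rw [hnb]; exact fun e => G.irrefl (e ▸ hadj)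
      rw [lsPlace_step G ξ hvne, hnb]
      exact ih (lsNext G ξ a u) (by omega) htight

lemma lsAdd_coupling (hξ : ∀ v, (ξ v).Nodup ∧ ∀ w, w ∈ ξ v ↔ G.Adj v w)
    {a b : V → ℕ} {M : ℕ} (hLa : EdgeLip G a) (hLb : EdgeLip G b)
    (hab : ∀ v, a v ≤ M + b v) (u : V) :
    ∀ w, lsAdd G ξ a u w ≤ M + lsAdd G ξ b u w := by
  intro w
  unfold lsAdd
  by_cases hw : w = lsPlace G ξ a u
  · rcases eq_or_lt_of_le (hab w) with heq | hlt
    · have hpb : lsPlace G ξ b u = lsPlace G ξ a u :=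
        lsPlace_coupling G ξ hξ hLa hLb hab (a u) u le_rfl (hw ▸ heq)
      rw [if_pos hw, if_pos (hw.trans hpb.symm)]
      omega
    · rw [if_pos hw]
      have : (0:ℕ) ≤ if w = lsPlace G ξ b u then 1 else 0 := Nat.zero_le _
      split <;> omega
  · rw [if_neg hw]
    have := hab w
    split <;> omega

lemma edgeLip_lsAdd (hξ : ∀ v, (ξ v).Nodup ∧ ∀ w, w ∈ ξ v ↔ G.Adj v w)
    {a : V → ℕ} (hLa : EdgeLip G a) (u : V) : EdgeLip G (lsAdd G ξ a u) := by
  intro v w hvw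
  unfold lsAdd
  by_cases hv : v = lsPlace G ξ a u
  · subst hv
    have hmin : lsNext G ξ a (lsPlace G ξ a u) = lsPlace G ξ a u :=
      lsNext_lsPlace G ξ hξ (a u) u le_rfl
    have h1 : a (lsPlace G ξ a u) ≤ a w := lsNext_eq_self G ξ hξ hmin w hvw
    rw [if_pos rfl]
    split <;> omega
  · rw [if_neg hv]
    have := hLa v w hvw
    split <;> omega

lemma edgeLip_zero : EdgeLip G (fun _ => 0) := fun _ _ _ => by simp

lemma edgeLip_foldl (hξ : ∀ v, (ξ v).Nodup ∧ ∀ w, w ∈ ξ v ↔ G.Adj v w) :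
    ∀ (cs : List V) (a : V → ℕ), EdgeLip G a → EdgeLip G (cs.foldl (lsAdd G ξ) a) := by
  intro cs
  induction cs with
  | nil => intro a ha; exact ha
  | cons u cs ih => intro a ha; exact ih _ (edgeLip_lsAdd G ξ hξ ha u)

lemma foldl_coupling (hξ : ∀ v, (ξ v).Nodup ∧ ∀ w, w ∈ ξ v ↔ G.Adj v w) {M : ℕ} :
    ∀ (cs : List V) (a b : V → ℕ), EdgeLip G a → EdgeLip G b →
      (∀ v, a v ≤ M + b v) →
      ∀ v, cs.foldl (lsAdd G ξ) a v ≤ M + cs.foldl (lsAdd G ξ) b v := by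
  intro cs
  induction cs with
  | nil => intro a b _ _ hab v; exact hab v
  | cons u cs ih =>
    intro a b ha hb hab v
    exact ih (lsAdd G ξ a u) (lsAdd G ξ b u) (edgeLip_lsAdd G ξ hξ ha u)
      (edgeLip_lsAdd G ξ hξ hb u) (lsAdd_coupling G ξ hξ ha hb hab u) v

lemma foldl_le_foldl : ∀ (cs : List V) (a : V → ℕ) (v : V), a v ≤ cs.foldl (lsAdd G ξ) a v := by
  intro cs
  induction cs with
  | nil => intro a v; exact le_rfl
  | cons u cs ih =>
    intro a v
    refine le_trans ?_ (ih (lsAdd G ξ a u) v)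
    unfold lsAdd
    split <;> omega

lemma lsMaxLoad_append_le (hξ : ∀ v, (ξ v).Nodup ∧ ∀ w, w ∈ ξ v ↔ G.Adj v w) (bs cs : List V) :
    lsMaxLoad G ξ (bs ++ cs) ≤ lsMaxLoad G ξ bs + lsMaxLoad G ξ cs := by
  unfold lsMaxLoad
  apply Finset.sup_le
  intro v _
  have h1 : lsLoads G ξ (bs ++ cs) v = cs.foldl (lsAdd G ξ) (lsLoads G ξ bs) v := by
    unfold lsLoads; rw [List.foldl_append]
  rw [h1]
  have h2 := foldl_coupling G ξ hξ (M := Finset.univ.sup (lsLoads G ξ bs)) cs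
    (lsLoads G ξ bs) (fun _ => 0)
    (by
      have : ∀ (ds : List V), EdgeLip G (lsLoads G ξ ds) := fun ds =>
        edgeLip_foldl G ξ hξ ds _ (edgeLip_zero G)
      exact this bs)
    (edgeLip_zero G)
    (fun w => by
      have := Finset.le_sup (f := lsLoads G ξ bs) (Finset.mem_univ w)
      omega)
    v
  refine le_trans h2 ?_
  have h3 : cs.foldl (lsAdd G ξ) (fun _ => 0) v = lsLoads G ξ cs v := rfl
  rw [h3]
  exact Nat.add_le_add_left (Finset.le_sup (Finset.mem_univ v)) _

lemma lsMaxLoad_le_append (bs cs : List V) :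
    lsMaxLoad G ξ bs ≤ lsMaxLoad G ξ (bs ++ cs) := by
  unfold lsMaxLoad
  apply Finset.sup_le
  intro v _
  refine le_trans ?_ (Finset.le_sup (Finset.mem_univ v))
  have h1 : lsLoads G ξ (bs ++ cs) v = cs.foldl (lsAdd G ξ) (lsLoads G ξ bs) v := by
    unfold lsLoads; rw [List.foldl_append]
  rw [h1]
  exact foldl_le_foldl G ξ cs _ v

end LSAux
section Counting

variable (G : SimpleGraph V) [DecidableRel G.Adj] (ξ : V → List V)

lemma card_split (m r : ℕ) (P : (Fin m → V) → Prop) (Q : (Fin r → V) → Prop)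
    [DecidablePred P] [DecidablePred Q] :
    (univ.filter fun bs : Fin (m + r) → V =>
        P (fun i => bs (Fin.castAdd r i)) ∧ Q (fun i => bs (Fin.natAdd m i))).card
      = (univ.filter P).card * (univ.filter Q).card := by
  classical
  rw [← Finset.card_product, ← Finset.filter_product, Finset.univ_product_univ]
  apply Finset.card_bij' (i := fun (bs : Fin (m + r) → V) _ =>
      ((fun i => bs (Fin.castAdd r i)), (fun i => bs (Fin.natAdd m i))))
    (j := fun (p : (Fin m → V) × (Fin r → V)) _ => Fin.append p.1 p.2)
  · intro bs hbs
    simp only [Finset.mem_filter, Finset.mem_univ, true_and] at hbs ⊢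
    exact hbs
  · intro p hp
    simp only [Finset.mem_filter, Finset.mem_univ, true_and] at hp ⊢
    have e1 : (fun i => Fin.append p.1 p.2 (Fin.castAdd r i)) = p.1 :=
      funext fun i => Fin.append_left _ _ i
    have e2 : (fun i => Fin.append p.1 p.2 (Fin.natAdd m i)) = p.2 :=
      funext fun i => Fin.append_right _ _ i
    rw [e1, e2]
    exact hp
  · intro bs _
    exact Fin.append_castAdd_natAdd
  · intro p _
    have e1 : (fun i => Fin.append p.1 p.2 (Fin.castAdd r i)) = p.1 :=
      funext fun i => Fin.append_left _ _ i
    have e2 : (fun i => Fin.append p.1 p.2 (Fin.natAdd m i)) = p.2 :=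
      funext fun i => Fin.append_right _ _ i
    rw [e1, e2]

/-- Number of birthplace sequences of length `m` whose maximum load is at least `t`. -/
noncomputable def cnt (m t : ℕ) : ℕ :=
  (univ.filter fun bs : Fin m → V => t ≤ lsMaxLoad G ξ (List.ofFn bs)).card

lemma card_filter_true (r : ℕ) :
    (univ.filter fun _ : Fin r → V => True).card = (Fintype.card V) ^ r := by
  simp [Finset.filter_true, Finset.card_univ]

lemma cnt_pad (hξ : ∀ v, (ξ v).Nodup ∧ ∀ w, w ∈ ξ v ↔ G.Adj v w) (m r t : ℕ) :
    cnt G ξ m t * (Fintype.card V) ^ r ≤ cnt G ξ (m + r) t := by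
  have h1 := card_split (V := V) m r
    (fun c : Fin m → V => t ≤ lsMaxLoad G ξ (List.ofFn c)) (fun _ : Fin r → V => True)
  rw [card_filter_true] at h1
  unfold cnt
  rw [← h1]
  apply Finset.card_le_card
  intro bs hbs
  simp only [Finset.mem_filter, Finset.mem_univ, true_and, and_true] at hbs ⊢
  rw [List.ofFn_add]
  exact le_trans hbs (lsMaxLoad_le_append G ξ _ _)

lemma cnt_core (hξ : ∀ v, (ξ v).Nodup ∧ ∀ w, w ∈ ξ v ↔ G.Adj v w)
    (z x : ℕ) (hx : 1 ≤ x) :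
    ∀ (k m : ℕ), 1 ≤ m → m ≤ k * z →
      cnt G ξ m (k * x) * (Fintype.card V) ^ z
        ≤ k * cnt G ξ z x * (Fintype.card V) ^ m := by
  intro k
  induction k with
  | zero => intro m h1 h2; rw [Nat.zero_mul] at h2; omega
  | succ k ih =>
    intro m hm1 hm2
    by_cases hmz : m ≤ z
    · obtain ⟨r, rfl⟩ : ∃ r, z = m + r := ⟨z - m, by omega⟩
      have hmono : cnt G ξ m ((k + 1) * x) ≤ cnt G ξ m x := by
        apply Finset.card_le_card
        apply Finset.monotone_filter_right
        intro bs _ hbs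
        refine le_trans ?_ hbs
        calc x = 1 * x := (one_mul x).symm
        _ ≤ (k + 1) * x := Nat.mul_le_mul_right x (by omega)
      calc cnt G ξ m ((k + 1) * x) * (Fintype.card V) ^ (m + r)
          ≤ cnt G ξ m x * (Fintype.card V) ^ (m + r) :=
            Nat.mul_le_mul_right _ hmono
        _ = (cnt G ξ m x * (Fintype.card V) ^ r) * (Fintype.card V) ^ m := by
            rw [pow_add]; ring
        _ ≤ cnt G ξ (m + r) x * (Fintype.card V) ^ m :=
            Nat.mul_le_mul_right _ (cnt_pad G ξ hξ m r x)
        _ ≤ (k + 1) * cnt G ξ (m + r) x * (Fintype.card V) ^ m := by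
            apply Nat.mul_le_mul_right
            calc cnt G ξ (m + r) x = 1 * cnt G ξ (m + r) x := (one_mul _).symm
            _ ≤ (k + 1) * cnt G ξ (m + r) x := Nat.mul_le_mul_right _ (by omega)
    · push_neg at hmz
      obtain ⟨r, rfl⟩ : ∃ r, m = z + r := ⟨m - z, by omega⟩
      have hr1 : 1 ≤ r := by omega
      have hr2 : r ≤ k * z := by
        have : (k + 1) * z = k * z + z := by ring
        omega
      have hsub : (univ.filter fun bs : Fin (z + r) → V =>
            (k + 1) * x ≤ lsMaxLoad G ξ (List.ofFn bs))
          ⊆ (univ.filter fun bs : Fin (z + r) → V =>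
            (x ≤ lsMaxLoad G ξ (List.ofFn fun i => bs (Fin.castAdd r i)) ∧ True)
            ∨ (True ∧ k * x ≤ lsMaxLoad G ξ (List.ofFn fun i => bs (Fin.natAdd z i)))) := by
        intro bs hbs
        simp only [Finset.mem_filter, Finset.mem_univ, true_and, and_true] at hbs ⊢
        by_contra hcon
        push_neg at hcon
        obtain ⟨hc1, hc2⟩ := hcon
        have hdec : lsMaxLoad G ξ (List.ofFn bs)
            ≤ lsMaxLoad G ξ (List.ofFn fun i => bs (Fin.castAdd r i))
              + lsMaxLoad G ξ (List.ofFn fun i => bs (Fin.natAdd z i)) := by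
          rw [List.ofFn_add]
          exact lsMaxLoad_append_le G ξ hξ _ _
        have hx1 : (k + 1) * x = k * x + x := by ring
        omega
      have hE : (univ.filter fun bs : Fin (z + r) → V =>
            (x ≤ lsMaxLoad G ξ (List.ofFn fun i => bs (Fin.castAdd r i)) ∧ True)
            ∨ (True ∧ k * x ≤ lsMaxLoad G ξ (List.ofFn fun i => bs (Fin.natAdd z i)))).card
          ≤ cnt G ξ z x * (Fintype.card V) ^ r
            + (Fintype.card V) ^ z * cnt G ξ r (k * x) := by
        rw [Finset.filter_or]
        refine le_trans (Finset.card_union_le _ _) ?_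
        apply Nat.add_le_add
        · rw [card_split (V := V) z r
            (fun c : Fin z → V => x ≤ lsMaxLoad G ξ (List.ofFn c)) (fun _ => True),
            card_filter_true]
          exact le_rfl
        · rw [card_split (V := V) z r
            (fun _ : Fin z → V => True)
            (fun d : Fin r → V => k * x ≤ lsMaxLoad G ξ (List.ofFn d)),
            card_filter_true]
          exact le_rfl
      have hcard : cnt G ξ (z + r) ((k + 1) * x)
          ≤ cnt G ξ z x * (Fintype.card V) ^ r
            + (Fintype.card V) ^ z * cnt G ξ r (k * x) :=
        le_trans (Finset.card_le_card hsub) hE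
      have hih := ih r hr1 hr2
      calc cnt G ξ (z + r) ((k + 1) * x) * (Fintype.card V) ^ z
          ≤ (cnt G ξ z x * (Fintype.card V) ^ r
              + (Fintype.card V) ^ z * cnt G ξ r (k * x)) * (Fintype.card V) ^ z :=
            Nat.mul_le_mul_right _ hcard
        _ = cnt G ξ z x * (Fintype.card V) ^ (z + r)
              + (Fintype.card V) ^ z * (cnt G ξ r (k * x) * (Fintype.card V) ^ z) := by
            rw [pow_add]; ring
        _ ≤ cnt G ξ z x * (Fintype.card V) ^ (z + r)
              + (Fintype.card V) ^ z * (k * cnt G ξ z x * (Fintype.card V) ^ r) :=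
            Nat.add_le_add_left (Nat.mul_le_mul_left _ hih) _
        _ = (k + 1) * cnt G ξ z x * (Fintype.card V) ^ (z + r) := by
            rw [pow_add]; ring

end Counting
/-- **Subadditivity.**
For local search allocation of `n` balls into the `n` vertices of `G` with i.i.d.
uniform birthplaces (probabilities written as counting fractions over the finite
sample space of birthplace sequences), for any `1 ≤ z ≤ n` and any `x ≥ 0`,
`P[X_max^(n) ≥ ⌈n/z⌉·x] ≤ ⌈n/z⌉ · P[X_max^(z) ≥ x]`. -/
theorem lsMaxLoad_subadditivity (G : SimpleGraph V) [DecidableRel G.Adj]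
    (ξ : V → List V)
    (hξ : ∀ v, (ξ v).Nodup ∧ ∀ w, w ∈ ξ v ↔ G.Adj v w)
    (n : ℕ) (hcard : Fintype.card V = n)
    (z : ℕ) (hz1 : 1 ≤ z) (hzn : z ≤ n) (x : ℕ) :
    ((univ.filter (fun bs : Fin n → V =>
        ((n + z - 1) / z) * x ≤ lsMaxLoad G ξ (List.ofFn bs))).card : ℝ)
        / (Fintype.card V : ℝ) ^ n
      ≤ ((n + z - 1) / z : ℕ) *
        (((univ.filter (fun bs : Fin z → V =>
            x ≤ lsMaxLoad G ξ (List.ofFn bs))).card : ℝ)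
          / (Fintype.card V : ℝ) ^ z) := by
  have hn1 : 1 ≤ n := le_trans hz1 hzn
  have hNn : 0 < Fintype.card V := by omega
  have hNR : (0:ℝ) < (Fintype.card V : ℝ) := by exact_mod_cast hNn
  have hk1 : 1 ≤ (n + z - 1) / z := by
    rw [Nat.one_le_div_iff (by omega)]; omega
  by_cases hx0 : x = 0
  · subst hx0
    have h1 : (univ.filter (fun bs : Fin n → V =>
        ((n + z - 1) / z) * 0 ≤ lsMaxLoad G ξ (List.ofFn bs))) = univ :=
      Finset.filter_true_of_mem (fun _ _ => by simp)
    have h2 : (univ.filter (fun bs : Fin z → V =>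
        0 ≤ lsMaxLoad G ξ (List.ofFn bs))) = univ :=
      Finset.filter_true_of_mem (fun _ _ => Nat.zero_le _)
    rw [h1, h2, Finset.card_univ, Finset.card_univ]
    have hcf : ∀ m : ℕ, (Fintype.card (Fin m → V) : ℝ) = (Fintype.card V : ℝ) ^ m := by
      intro m; rw [Fintype.card_fun, Fintype.card_fin]; push_cast; ring
    rw [hcf, hcf, div_self (by positivity), div_self (by positivity), mul_one]
    exact_mod_cast hk1
  · have hx : 1 ≤ x := by omega
    obtain ⟨k, hkdef⟩ : ∃ k, (n + z - 1) / z = k := ⟨_, rfl⟩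
    rw [hkdef]
    have hnk : n ≤ k * z := by
      have h := Nat.div_add_mod (n + z - 1) z
      have hmod : (n + z - 1) % z < z := Nat.mod_lt _ (by omega)
      rw [hkdef, Nat.mul_comm z k] at h
      obtain ⟨B, hB⟩ : ∃ B, (n + z - 1) % z = B := ⟨_, rfl⟩
      rw [hB] at h hmod
      obtain ⟨A, hA⟩ : ∃ A, k * z = A := ⟨_, rfl⟩
      rw [hA] at h ⊢
      clear hA hB hkdef
      omega
    have hcore := cnt_core G ξ hξ z x hx k n hn1 hnk
    unfold cnt at hcore
    rw [← mul_div_assoc, div_le_div_iff₀ (by positivity) (by positivity)]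
    exact_mod_cast hcore
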